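/- Let S be a finite random variable and Ŝ' a function of another random variable S̃ attaining the maximum a posteriori estimate of S given S̃. Then for ρ = min_s p_S(s) > 0 and Ŝ the maximum likelihood estimate of S given S̃: Σ_{s≠ŝ} p_{Ŝ|S}(ŝ|s) ≤ H(S|S̃)/(2ρ·log 2), where H is conditional entropy in nats. -/

import Mathlib

open Finset Real

lemma lemA {x : ℝ} (hx0 : 0 ≤ x) :
    x * (Real.log 2 + 1 - 2*x) ≤ -(x * Real.log x) := by
  rcases eq_or_lt_of_le hx0 with h | h
  · simp [← h]
  · have hlog : Real.log (2*x) ≤ 2*x - 1 := Real.log_le_sub_one_of_pos (by linarith)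
    rw [Real.log_mul (by norm_num) (ne_of_gt h)] at hlog
    nlinarith

lemma key {S : Type*} [Fintype S] [DecidableEq S] (q : S → ℝ)
    (hq : ∀ s, 0 ≤ q s) (hsum : ∑ s, q s = 1) (m : S) (hm : ∀ s, q s ≤ q m) :
    2 * Real.log 2 * (1 - q m) ≤ -∑ s, q s * Real.log (q s) := by
  have hl2a : Real.log 2 < 0.7 := lt_trans Real.log_two_lt_d9 (by norm_num)
  have hl2b : (0.69 : ℝ) < Real.log 2 := lt_trans (by norm_num) Real.log_two_gt_d9
  have hqm1 : q m ≤ 1 := by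
    have := Finset.single_le_sum (f := q) (fun s _ => hq s) (mem_univ m)
    linarith
  rcases le_or_gt (q m) (1/2) with hcase | hcase
  · -- all q s ≤ 1/2
    have hs : ∀ s ∈ (univ : Finset S),
        q s * (Real.log 2 + 1 - 2 * q m) ≤ -(q s * Real.log (q s)) := by
      intro s _
      have h1 := lemA (hq s)
      nlinarith [hq s, hm s]
    have hsum2 := Finset.sum_le_sum hs
    have e1 : ∑ s, q s * (Real.log 2 + 1 - 2 * q m)
        = (Real.log 2 + 1) - 2 * q m := by
      rw [← Finset.sum_mul, hsum, one_mul]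
    have e2 : ∑ s, -(q s * Real.log (q s)) = -∑ s, q s * Real.log (q s) := by
      simp
    rw [e1, e2] at hsum2
    nlinarith
  · -- q m > 1/2
    set e : ℝ := 1 - q m with he
    have he0 : 0 ≤ e := by simp only [he]; linarith
    have hehalf : e < 1/2 := by simp only [he]; linarith
    have hqm0 : (0:ℝ) < q m := by linarith
    have hsplit : q m + ∑ s ∈ univ.erase m, q s = 1 := by
      rw [Finset.add_sum_erase univ q (mem_univ m), hsum]
    have hE : ∑ s ∈ univ.erase m, q s = e := by
      simp only [he]; linarith
    have hqe : ∀ s ∈ univ.erase m, q s ≤ e := by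
      intro s hs
      have h1 : q s ≤ ∑ x ∈ univ.erase m, q x :=
        Finset.single_le_sum (f := q) (fun i _ => hq i) hs
      rw [hE] at h1; exact h1
    have hTail : e * (Real.log 2 + 1) - 2 * (e * e)
        ≤ ∑ s ∈ univ.erase m, -(q s * Real.log (q s)) := by
      have hb : ∀ s ∈ univ.erase m,
          q s * (Real.log 2 + 1 - 2 * e) ≤ -(q s * Real.log (q s)) := by
        intro s hs
        have h1 := lemA (hq s)
        nlinarith [hq s, hqe s hs]
      have hsum2 := Finset.sum_le_sum hb
      have e1 : ∑ s ∈ univ.erase m, q s * (Real.log 2 + 1 - 2 * e)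
          = e * (Real.log 2 + 1) - 2 * (e * e) := by
        rw [← Finset.sum_mul, hE]
        ring
      linarith [e1 ▸ hsum2]
    have hSplitSum : -∑ s, q s * Real.log (q s)
        = -(q m * Real.log (q m)) + ∑ s ∈ univ.erase m, -(q s * Real.log (q s)) := by
      rw [← Finset.add_sum_erase univ (fun s => q s * Real.log (q s)) (mem_univ m)]
      rw [Finset.sum_neg_distrib]
      ring
    have hB1 : e * (1 - e) ≤ -(q m * Real.log (q m)) := by
      have h1 : Real.log (q m) ≤ q m - 1 := Real.log_le_sub_one_of_pos hqm0
      nlinarith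
    have hB2 : (1 - e) * (Real.log 2 - 1 + 2*e) ≤ -(q m * Real.log (q m)) := by
      have h1 : Real.log (2 * q m) ≤ 2 * q m - 1 := Real.log_le_sub_one_of_pos (by linarith)
      rw [Real.log_mul (by norm_num) (ne_of_gt hqm0)] at h1
      nlinarith
    rw [hSplitSum]
    rcases le_or_gt e (2/5) with hsub | hsub
    · nlinarith
    · nlinarith

lemma pert {S : Type*} [Fintype S] [DecidableEq S]
    (f : S → ℝ) (hf : ∀ s, 0 ≤ f s) (m : S) (hm : ∀ s, f s ≤ f m) :
    2 * Real.log 2 * ((∑ s, f s) - f m) ≤ -∑ s, f s * Real.log (f s / ∑ s', f s') := by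
  rcases eq_or_lt_of_le (Finset.sum_nonneg (fun s (_ : s ∈ univ) => hf s)) with h0 | h0
  · -- all f s = 0
    have hz : ∀ s, f s = 0 := by
      intro s
      exact (Finset.sum_eq_zero_iff_of_nonneg (fun s _ => hf s)).mp h0.symm s (mem_univ s)
    simp [hz]
  · set P : ℝ := ∑ s, f s with hP
    have hP0 : (0:ℝ) < P := h0
    set q : S → ℝ := fun s => f s / P with hq
    have hqnn : ∀ s, 0 ≤ q s := fun s => div_nonneg (hf s) hP0.le
    have hqsum : ∑ s, q s = 1 := by
      simp only [hq]
      rw [← Finset.sum_div, ← hP]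
      exact div_self (ne_of_gt hP0)
    have hqm : ∀ s, q s ≤ q m := fun s => by
      simp only [hq]
      exact div_le_div_of_nonneg_right (hm s) hP0.le
    have hkey := key q hqnn hqsum m hqm
    have hmul := mul_le_mul_of_nonneg_left hkey hP0.le
    have eL : P * (2 * Real.log 2 * (1 - q m)) = 2 * Real.log 2 * (P - f m) := by
      have hqmv : q m = f m / P := rfl
      rw [hqmv]
      field_simp
    have eR : P * (-∑ s, q s * Real.log (q s)) = -∑ s, f s * Real.log (f s / P) := by
      rw [mul_neg, Finset.mul_sum]
      apply neg_inj.mpr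
      apply Finset.sum_congr rfl
      intro s _
      show P * (f s / P * Real.log (f s / P)) = f s * Real.log (f s / P)
      field_simp
    calc 2 * Real.log 2 * (P - f m) = P * (2 * Real.log 2 * (1 - q m)) := eL.symm
      _ ≤ P * (-∑ s, q s * Real.log (q s)) := hmul
      _ = -∑ s, f s * Real.log (f s / P) := eR

/-- The total off-diagonal mass of the maximum likelihood estimate channel
`p_{Ŝ|S}` is at most `H(S|S̃)/(2ρ log 2)`, via the Ho–Verdú bound for the MAP
estimator. Here `ML` is the maximum likelihood estimator of `S` from `S̃` and
`MAP` a maximum a posteriori estimator. -/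
theorem ml_offdiag_le_condEntropy {S T : Type*} [Fintype S] [Fintype T]
    [Nonempty S] [DecidableEq S]
    (pS : S → ℝ) (hpSpos : ∀ s, 0 < pS s) (hpSsum : ∑ s, pS s = 1)
    (W : S → T → ℝ) (hWnn : ∀ s t, 0 ≤ W s t) (hWsum : ∀ s, ∑ t, W s t = 1)
    (MAP ML : T → S)
    (hMAP : ∀ t s, pS s * W s t ≤ pS (MAP t) * W (MAP t) t)
    (hML : ∀ t s, W s t ≤ W (ML t) t) :
    ∑ s, ∑ t, (if ML t ≠ s then W s t else 0) ≤
      (-∑ s, ∑ t, pS s * W s t *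
          Real.log (pS s * W s t / (∑ s', pS s' * W s' t))) /
        (2 * (Finset.univ.inf' Finset.univ_nonempty pS) * Real.log 2) := by
  set ρ : ℝ := Finset.univ.inf' Finset.univ_nonempty pS with hρ
  have hρpos : 0 < ρ := by
    rw [hρ, Finset.lt_inf'_iff]
    exact fun b _ => hpSpos b
  have hρle : ∀ s, ρ ≤ pS s := fun s => Finset.inf'_le _ (mem_univ s)
  have hl2 : (0:ℝ) < Real.log 2 := Real.log_pos (by norm_num)
  have hden : (0:ℝ) < 2 * ρ * Real.log 2 := by positivity
  rw [le_div_iff₀ hden]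
  have main : ∀ t, (∑ s, if ML t ≠ s then W s t else 0) * (2 * ρ * Real.log 2)
      ≤ -∑ s, pS s * W s t * Real.log (pS s * W s t / (∑ s', pS s' * W s' t)) := by
    intro t
    -- step 1 : off-diagonal sum = (∑ s, W s t) - W (ML t) t
    have e1 : (∑ s, if ML t ≠ s then W s t else 0) = (∑ s, W s t) - W (ML t) t := by
      have h : ∀ s, (if ML t ≠ s then W s t else 0)
          = W s t - (if ML t = s then W s t else 0) := by
        intro s; by_cases h : ML t = s <;> simp [h]
      simp only [h]
      rw [Finset.sum_sub_distrib, Finset.sum_ite_eq]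
      simp
    have hPt : ∑ s ∈ univ.erase (MAP t), W s t = (∑ s, W s t) - W (MAP t) t := by
      have h := Finset.add_sum_erase univ (fun s => W s t) (mem_univ (MAP t))
      linarith
    have hQt : ∑ s ∈ univ.erase (MAP t), pS s * W s t
        = (∑ s', pS s' * W s' t) - pS (MAP t) * W (MAP t) t := by
      have h := Finset.add_sum_erase univ (fun s => pS s * W s t) (mem_univ (MAP t))
      linarith
    have step2 : ρ * ((∑ s, W s t) - W (ML t) t)
        ≤ (∑ s', pS s' * W s' t) - pS (MAP t) * W (MAP t) t := by
      have h1 : (∑ s, W s t) - W (ML t) t ≤ (∑ s, W s t) - W (MAP t) t := by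
        linarith [hML t (MAP t)]
      have h2 : ρ * (∑ s ∈ univ.erase (MAP t), W s t)
          ≤ ∑ s ∈ univ.erase (MAP t), pS s * W s t := by
        rw [Finset.mul_sum]
        exact Finset.sum_le_sum (fun s _ =>
          mul_le_mul_of_nonneg_right (hρle s) (hWnn s t))
      rw [hPt] at h2
      rw [← hQt]
      nlinarith [mul_le_mul_of_nonneg_left h1 hρpos.le]
    have step3 := pert (fun s => pS s * W s t)
      (fun s => mul_nonneg (hpSpos s).le (hWnn s t)) (MAP t) (hMAP t)
    simp only at step3
    rw [e1]
    calc ((∑ s, W s t) - W (ML t) t) * (2 * ρ * Real.log 2)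
        = 2 * Real.log 2 * (ρ * ((∑ s, W s t) - W (ML t) t)) := by ring
      _ ≤ 2 * Real.log 2 * ((∑ s', pS s' * W s' t) - pS (MAP t) * W (MAP t) t) := by
          apply mul_le_mul_of_nonneg_left step2 (by positivity)
      _ ≤ -∑ s, pS s * W s t * Real.log (pS s * W s t / (∑ s', pS s' * W s' t)) := step3
  calc (∑ s, ∑ t, if ML t ≠ s then W s t else 0) * (2 * ρ * Real.log 2)
      = ∑ t, (∑ s, if ML t ≠ s then W s t else 0) * (2 * ρ * Real.log 2) := by
        rw [Finset.sum_comm, Finset.sum_mul]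
    _ ≤ ∑ t, -∑ s, pS s * W s t * Real.log (pS s * W s t / (∑ s', pS s' * W s' t)) :=
        Finset.sum_le_sum (fun t _ => main t)
    _ = -∑ s, ∑ t, pS s * W s t * Real.log (pS s * W s t / (∑ s', pS s' * W s' t)) := by
        rw [Finset.sum_neg_distrib, Finset.sum_comm]
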